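/- Let B = [[α₁, r, s], [0, α₂, t], [0, 0, α₃]] ∈ ℂ^{3×3} and assume no two of the entries r, s, t vanish simultaneously. If r·s·t = 0, then for every λ ∈ ℂ that is not an eigenvalue of B (i.e., λ ∉ {α₁, α₂, α₃}), the three eigenvalues of the Hermitian matrix (λI − B)ᴴ(λI − B) are pairwise distinct; i.e., all three singular values of λI − B are simple. -/

import Mathlib

open Matrix
open scoped ComplexConjugate

set_option linter.unreachableTactic false
set_option linter.unusedTactic false

lemma aux_cross {x v w m : Fin 3 → ℂ}
    (hm : m = ![v 1 * w 2 - v 2 * w 1, v 2 * w 0 - v 0 * w 2, v 0 * w 1 - v 1 * w 0])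
    (hxv : x 0 * v 0 + x 1 * v 1 + x 2 * v 2 = 0)
    (hxw : x 0 * w 0 + x 1 * w 1 + x 2 * w 2 = 0) (i j : Fin 3) :
    x i * m j = x j * m i := by
  subst hm
  fin_cases i <;> fin_cases j <;>
    simp only [Fin.zero_eta, Fin.mk_one, Fin.reduceFinMk, Matrix.cons_val_zero,
      Matrix.cons_val_one, Matrix.head_cons, Matrix.cons_val_two, Matrix.tail_cons] <;>
    first
      | ring1
      | linear_combination (v 0) * hxw - (w 0) * hxv
      | linear_combination (w 0) * hxv - (v 0) * hxw
      | linear_combination (v 1) * hxw - (w 1) * hxv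
      | linear_combination (w 1) * hxv - (v 1) * hxw
      | linear_combination (v 2) * hxw - (w 2) * hxv
      | linear_combination (w 2) * hxv - (v 2) * hxw

lemma aux_minor (N : Matrix (Fin 3) (Fin 3) ℂ) (v w : Fin 3 → ℂ)
    (hv : N *ᵥ v = 0) (hw : N *ᵥ w = 0)
    (hli : ∀ a b : ℂ, (∀ k, a * v k + b * w k = 0) → a = 0 ∧ b = 0)
    (p q c1 c2 : Fin 3) :
    N p c1 * N q c2 - N p c2 * N q c1 = 0 := by
  set m : Fin 3 → ℂ :=
    ![v 1 * w 2 - v 2 * w 1, v 2 * w 0 - v 0 * w 2, v 0 * w 1 - v 1 * w 0] with hm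
  have hrowv : ∀ i : Fin 3, N i 0 * v 0 + N i 1 * v 1 + N i 2 * v 2 = 0 := by
    intro i
    have := congrFun hv i
    simpa [Matrix.mulVec, dotProduct, Fin.sum_univ_three] using this
  have hroww : ∀ i : Fin 3, N i 0 * w 0 + N i 1 * w 1 + N i 2 * w 2 = 0 := by
    intro i
    have := congrFun hw i
    simpa [Matrix.mulVec, dotProduct, Fin.sum_univ_three] using this
  have hk : ∃ k, m k ≠ 0 := by
    by_contra hc
    push_neg at hc
    have h0 : v 1 * w 2 - v 2 * w 1 = 0 := by simpa [hm] using hc 0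
    have h1 : v 2 * w 0 - v 0 * w 2 = 0 := by simpa [hm] using hc 1
    have h2 : v 0 * w 1 - v 1 * w 0 = 0 := by simpa [hm] using hc 2
    have hv0 : v 0 ≠ 0 ∨ v 1 ≠ 0 ∨ v 2 ≠ 0 := by
      by_contra hcc
      push_neg at hcc
      obtain ⟨a0, a1, a2⟩ := hcc
      refine one_ne_zero ((hli 1 0 fun k => ?_).1)
      fin_cases k <;>
        simp only [Fin.zero_eta, Fin.mk_one, Fin.reduceFinMk, a0, a1, a2] <;> ring
    rcases hv0 with hk0 | hk0 | hk0
    · refine hk0 (neg_eq_zero.mp (hli (w 0) (-(v 0)) fun k => ?_).2)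
      fin_cases k <;>
        simp only [Fin.zero_eta, Fin.mk_one, Fin.reduceFinMk] <;>
        (first | ring1 | linear_combination h0 | linear_combination -h0 | linear_combination h1 | linear_combination -h1 | linear_combination h2 | linear_combination -h2)
    · refine hk0 (neg_eq_zero.mp (hli (w 1) (-(v 1)) fun k => ?_).2)
      fin_cases k <;>
        simp only [Fin.zero_eta, Fin.mk_one, Fin.reduceFinMk] <;>
        (first | ring1 | linear_combination h0 | linear_combination -h0 | linear_combination h1 | linear_combination -h1 | linear_combination h2 | linear_combination -h2)
    · refine hk0 (neg_eq_zero.mp (hli (w 2) (-(v 2)) fun k => ?_).2)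
      fin_cases k <;>
        simp only [Fin.zero_eta, Fin.mk_one, Fin.reduceFinMk] <;>
        (first | ring1 | linear_combination h0 | linear_combination -h0 | linear_combination h1 | linear_combination -h1 | linear_combination h2 | linear_combination -h2)
  obtain ⟨k, hkne⟩ := hk
  have e1 : N p c1 * m k = N p k * m c1 := aux_cross hm (hrowv p) (hroww p) c1 k
  have e2 : N p c2 * m k = N p k * m c2 := aux_cross hm (hrowv p) (hroww p) c2 k
  have f1 : N q c1 * m k = N q k * m c1 := aux_cross hm (hrowv q) (hroww q) c1 k
  have f2 : N q c2 * m k = N q k * m c2 := aux_cross hm (hrowv q) (hroww q) c2 k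
  have key : (N p c1 * N q c2 - N p c2 * N q c1) * (m k * m k) = 0 := by
    linear_combination (N q c2 * m k) * e1 + (N p k * m c1) * f2
      - (N q c1 * m k) * e2 - (N p k * m c2) * f1
  rcases mul_eq_zero.mp key with h | h
  · exact h
  · exact absurd (mul_self_eq_zero.mp h) hkne

/-- The eigenvalues (squares of the singular values) of `λI - B`, i.e. the eigenvalues
of the Hermitian matrix `(λI - B)ᴴ (λI - B)`, counted with multiplicity. -/
noncomputable def sqSingVals {n : ℕ} (B : Matrix (Fin n) (Fin n) ℂ) (lam : ℂ) :
    Fin n → ℝ :=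
  (Matrix.isHermitian_conjTranspose_mul_self
    (lam • (1 : Matrix (Fin n) (Fin n) ℂ) - B)).eigenvalues

set_option maxHeartbeats 1600000 in
/-- For `B = [[α₁, r, s], [0, α₂, t], [0, 0, α₃]]` in which no two of `r, s, t` vanish
simultaneously but `r·s·t = 0`, all three singular values of `λI - B` are simple for
every `λ` that is not an eigenvalue of `B`. -/
theorem triangular_three_by_three_rst_zero_simple_singular_values
    (α₁ α₂ α₃ r s t : ℂ)
    (hrs : ¬(r = 0 ∧ s = 0)) (hrt : ¬(r = 0 ∧ t = 0)) (hst : ¬(s = 0 ∧ t = 0))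
    (hrst : r * s * t = 0) :
    ∀ lam : ℂ, lam ≠ α₁ → lam ≠ α₂ → lam ≠ α₃ →
      Function.Injective (sqSingVals !![α₁, r, s; 0, α₂, t; 0, 0, α₃] lam) := by
  intro lam h1 h2 h3 i j hij
  by_contra hne
  set B : Matrix (Fin 3) (Fin 3) ℂ := !![α₁, r, s; 0, α₂, t; 0, 0, α₃] with hB
  set A : Matrix (Fin 3) (Fin 3) ℂ := lam • (1 : Matrix (Fin 3) (Fin 3) ℂ) - B with hA
  have hM : (Aᴴ * A).IsHermitian := Matrix.isHermitian_conjTranspose_mul_self A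
  have heig : hM.eigenvalues i = hM.eigenvalues j := hij
  set μ : ℝ := hM.eigenvalues i with hμ
  set v : Fin 3 → ℂ := ⇑(hM.eigenvectorBasis i) with hvdef
  set w : Fin 3 → ℂ := ⇑(hM.eigenvectorBasis j) with hwdef
  set N : Matrix (Fin 3) (Fin 3) ℂ := Aᴴ * A - (μ : ℂ) • 1 with hN
  have hv : N *ᵥ v = 0 := by
    have h := hM.mulVec_eigenvectorBasis i
    rw [hN]
    funext k
    have := congrFun h k
    simp only [Pi.smul_apply, ← hvdef] at this
    simp [Matrix.sub_mulVec, Matrix.smul_mulVec, Matrix.one_mulVec, this,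
      Complex.real_smul, hμ]
  have hw : N *ᵥ w = 0 := by
    have h := hM.mulVec_eigenvectorBasis j
    rw [hN]
    funext k
    have := congrFun h k
    simp only [Pi.smul_apply, ← hwdef] at this
    simp [Matrix.sub_mulVec, Matrix.smul_mulVec, Matrix.one_mulVec, this,
      Complex.real_smul, heig, hμ]
  have horth := hM.eigenvectorBasis.orthonormal
  rw [orthonormal_iff_ite] at horth
  have hvv : conj (v 0) * v 0 + conj (v 1) * v 1 + conj (v 2) * v 2 = 1 := by
    have := horth i i
    rw [if_pos rfl] at this
    rw [← this]
    simp [PiLp.inner_apply, RCLike.inner_apply, Fin.sum_univ_three, hvdef, mul_comm]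
    rw [← this, PiLp.inner_apply, Fin.sum_univ_three]; simp only [RCLike.inner_apply]
  have hvw : conj (v 0) * w 0 + conj (v 1) * w 1 + conj (v 2) * w 2 = 0 := by
    have := horth i j
    simp only [if_neg hne] at this
    rw [← this]
    simp [PiLp.inner_apply, RCLike.inner_apply, Fin.sum_univ_three, hvdef, hwdef, mul_comm]
  have hwv : conj (w 0) * v 0 + conj (w 1) * v 1 + conj (w 2) * v 2 = 0 := by
    have := horth j i
    simp only [if_neg (Ne.symm hne)] at this
    rw [← this]
    simp [PiLp.inner_apply, RCLike.inner_apply, Fin.sum_univ_three, hvdef, hwdef, mul_comm]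
  have hww : conj (w 0) * w 0 + conj (w 1) * w 1 + conj (w 2) * w 2 = 1 := by
    have := horth j j
    rw [if_pos rfl] at this
    rw [← this]
    simp [PiLp.inner_apply, RCLike.inner_apply, Fin.sum_univ_three, hwdef, mul_comm]
    rw [← this, PiLp.inner_apply, Fin.sum_univ_three]; simp only [RCLike.inner_apply]
  have hli : ∀ a b : ℂ, (∀ k, a * v k + b * w k = 0) → a = 0 ∧ b = 0 := by
    intro a b hab
    constructor
    · linear_combination (conj (v 0)) * hab 0 + (conj (v 1)) * hab 1 + (conj (v 2)) * hab 2
        - a * hvv - b * hvw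
    · linear_combination (conj (w 0)) * hab 0 + (conj (w 1)) * hab 1 + (conj (w 2)) * hab 2
        - a * hwv - b * hww
  clear_value μ v w N A B
  clear hij heig hμ horth hvv hvw hwv hww
  have hN00 : N 0 0 = conj (lam - α₁) * (lam - α₁) - (μ:ℂ) := by
    rw [hN, hA, hB]
    simp [Matrix.mul_apply, Fin.sum_univ_three, Matrix.one_apply, Matrix.sub_apply,
      Matrix.smul_apply, Matrix.vecHead, Matrix.vecTail]
    try ring
  have hN01 : N 0 1 = -(conj (lam - α₁)) * r := by
    rw [hN, hA, hB]
    simp [Matrix.mul_apply, Fin.sum_univ_three, Matrix.one_apply, Matrix.sub_apply,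
      Matrix.smul_apply, Matrix.vecHead, Matrix.vecTail]
    try ring
  have hN02 : N 0 2 = -(conj (lam - α₁)) * s := by
    rw [hN, hA, hB]
    simp [Matrix.mul_apply, Fin.sum_univ_three, Matrix.one_apply, Matrix.sub_apply,
      Matrix.smul_apply, Matrix.vecHead, Matrix.vecTail]
    try ring
  have hN10 : N 1 0 = -(lam - α₁) * conj r := by
    rw [hN, hA, hB]
    simp [Matrix.mul_apply, Fin.sum_univ_three, Matrix.one_apply, Matrix.sub_apply,
      Matrix.smul_apply, Matrix.vecHead, Matrix.vecTail]
    try ring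
  have hN11 : N 1 1 = conj r * r + conj (lam - α₂) * (lam - α₂) - (μ:ℂ) := by
    rw [hN, hA, hB]
    simp [Matrix.mul_apply, Fin.sum_univ_three, Matrix.one_apply, Matrix.sub_apply,
      Matrix.smul_apply, Matrix.vecHead, Matrix.vecTail]
    try ring
  have hN12 : N 1 2 = conj r * s - conj (lam - α₂) * t := by
    rw [hN, hA, hB]
    simp [Matrix.mul_apply, Fin.sum_univ_three, Matrix.one_apply, Matrix.sub_apply,
      Matrix.smul_apply, Matrix.vecHead, Matrix.vecTail]
    try ring
  have hN21 : N 2 1 = conj s * r - conj t * (lam - α₂) := by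
    rw [hN, hA, hB]
    simp [Matrix.mul_apply, Fin.sum_univ_three, Matrix.one_apply, Matrix.sub_apply,
      Matrix.smul_apply, Matrix.vecHead, Matrix.vecTail]
    try ring
  have hN22 : N 2 2 = conj s * s + conj t * t + conj (lam - α₃) * (lam - α₃) - (μ:ℂ) := by
    rw [hN, hA, hB]
    simp [Matrix.mul_apply, Fin.sum_univ_three, Matrix.one_apply, Matrix.sub_apply,
      Matrix.smul_apply, Matrix.vecHead, Matrix.vecTail]
    try ring
  have hca : conj (lam - α₁) ≠ 0 := (map_ne_zero (starRingEnd ℂ)).mpr (sub_ne_zero.mpr h1)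
  rcases mul_eq_zero.mp hrst with h' | ht0
  · rcases mul_eq_zero.mp h' with hr0 | hs0
    · -- case r = 0
      have hs : s ≠ 0 := fun h => hrs ⟨hr0, h⟩
      have ht : t ≠ 0 := fun h => hrt ⟨hr0, h⟩
      have hminor := aux_minor N v w hv hw hli 0 2 1 2
      rw [hN01, hN02, hN21, hN22, hr0] at hminor
      have e : conj (lam - α₁) * (s * (conj t * (lam - α₂))) = 0 := by
        linear_combination -hminor
      have hct : conj t ≠ 0 := (map_ne_zero (starRingEnd ℂ)).mpr ht
      exact (mul_ne_zero hca (mul_ne_zero hs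
        (mul_ne_zero hct (sub_ne_zero.mpr h2)))) e
    · -- case s = 0
      have hr : r ≠ 0 := fun h => hrs ⟨h, hs0⟩
      have ht : t ≠ 0 := fun h => hst ⟨hs0, h⟩
      have hminor := aux_minor N v w hv hw hli 0 1 1 2
      rw [hN01, hN02, hN11, hN12, hs0] at hminor
      have e : conj (lam - α₁) * (r * (conj (lam - α₂) * t)) = 0 := by
        linear_combination hminor
      have hcb : conj (lam - α₂) ≠ 0 := (map_ne_zero (starRingEnd ℂ)).mpr (sub_ne_zero.mpr h2)
      exact (mul_ne_zero hca (mul_ne_zero hr (mul_ne_zero hcb ht))) e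
  · -- case t = 0
    have hr : r ≠ 0 := fun h => hrt ⟨h, ht0⟩
    have hs : s ≠ 0 := fun h => hst ⟨h, ht0⟩
    have hm1 := aux_minor N v w hv hw hli 0 1 1 2
    rw [hN01, hN02, hN11, hN12, ht0] at hm1
    have e1 : conj (lam - α₁) * s * (conj (lam - α₂) * (lam - α₂) - (μ:ℂ)) = 0 := by
      linear_combination hm1
    have hmu : (μ:ℂ) = conj (lam - α₂) * (lam - α₂) := by
      rcases mul_eq_zero.mp e1 with h | h
      · exact absurd h (mul_ne_zero hca hs)
      · linear_combination -h
    have hm2 := aux_minor N v w hv hw hli 0 1 0 1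
    rw [hN00, hN01, hN10, hN11] at hm2
    have e2 : conj (lam - α₂) * (lam - α₂) * (conj r * r) = 0 := by
      linear_combination (-1 : ℂ) * hm2 +
        ((μ:ℂ) - conj (lam - α₁) * (lam - α₁) - conj r * r) * hmu
    have hcb : conj (lam - α₂) ≠ 0 := (map_ne_zero (starRingEnd ℂ)).mpr (sub_ne_zero.mpr h2)
    have hcr : conj r ≠ 0 := (map_ne_zero (starRingEnd ℂ)).mpr hr
    exact (mul_ne_zero (mul_ne_zero hcb (sub_ne_zero.mpr h2))
      (mul_ne_zero hcr hr)) e2
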